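/- Let S ⊆ ℝ be a closed set with empty interior (e.g. a Cantor set), let C = S × S ⊆ ℝ², and let f(z) = −dist(z, C). Then for every z ∈ C, the Clarke subdifferential ∂°f(z) equals the closed unit Euclidean ball in ℝ². -/

import Mathlib

open Filter Set Metric

noncomputable abbrev E2 := EuclideanSpace ℝ (Fin 2)

-- helpers
noncomputable def mk2 (x y : ℝ) : E2 := (WithLp.equiv 2 (Fin 2 → ℝ)).symm ![x, y]
@[simp] lemma mk2_zero (x y : ℝ) : mk2 x y 0 = x := rfl
@[simp] lemma mk2_one (x y : ℝ) : mk2 x y 1 = y := rfl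

lemma le_infDist' {α : Type*} [MetricSpace α] {s : Set α} {r : ℝ} {x : α} (hs : s.Nonempty)
    (h : ∀ y ∈ s, r ≤ dist x y) : r ≤ infDist x s := by
  by_contra hlt
  push_neg at hlt
  obtain ⟨y, hy, hd⟩ := (infDist_lt_iff hs).1 hlt
  exact absurd hd (not_lt.2 (h y hy))

-- product distance formula
lemma prod_infDist {S : Set ℝ} (hS : IsClosed S) (hne : S.Nonempty) (w : E2) :
    infDist w {w' : E2 | w' 0 ∈ S ∧ w' 1 ∈ S}
      = Real.sqrt (infDist (w 0) S ^ 2 + infDist (w 1) S ^ 2) := by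
  obtain ⟨p, hp, hpd⟩ := hS.exists_infDist_eq_dist hne (w 0)
  obtain ⟨q, hq, hqd⟩ := hS.exists_infDist_eq_dist hne (w 1)
  apply le_antisymm
  · have hmem : mk2 p q ∈ {w' : E2 | w' 0 ∈ S ∧ w' 1 ∈ S} := ⟨hp, hq⟩
    have := infDist_le_dist_of_mem (x := w) hmem
    rw [EuclideanSpace.dist_eq] at this
    simpa [Fin.sum_univ_two, hpd, hqd] using this
  · refine le_infDist' (s := {w' : E2 | w' 0 ∈ S ∧ w' 1 ∈ S}) ⟨mk2 p q, ⟨hp, hq⟩⟩ ?_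
    rintro c ⟨hc0, hc1⟩
    rw [EuclideanSpace.dist_eq, Fin.sum_univ_two]
    apply Real.sqrt_le_sqrt
    have h0 : infDist (w 0) S ≤ dist (w 0) (c 0) := infDist_le_dist_of_mem hc0
    have h1 : infDist (w 1) S ≤ dist (w 1) (c 1) := infDist_le_dist_of_mem hc1
    have n0 : (0:ℝ) ≤ infDist (w 0) S := infDist_nonneg
    have n1 : (0:ℝ) ≤ infDist (w 1) S := infDist_nonneg
    gcongr

-- derivative of squared distance at a member point
lemma sq_infDist_deriv_mem {S : Set ℝ} {x : ℝ} (hx : x ∈ S) :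
    HasDerivAt (fun t => infDist t S ^ 2) 0 x := by
  rw [hasDerivAt_iff_isLittleO]
  have h0 : infDist x S = 0 := infDist_zero_of_mem hx
  simp only [h0, smul_zero, sub_zero]
  rw [Asymptotics.isLittleO_iff]
  intro c hc
  filter_upwards [Metric.ball_mem_nhds x hc] with t ht
  have hb : infDist t S ≤ |t - x| := by
    simpa [Real.dist_eq] using infDist_le_dist_of_mem (x := t) hx
  have hn : (0:ℝ) ≤ infDist t S := infDist_nonneg
  have : infDist t S ^ 2 - 0 ^ 2 = infDist t S ^ 2 := by ring
  rw [Real.norm_eq_abs, Real.norm_eq_abs]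
  have h2 : infDist t S ^ 2 ≤ |t - x| * |t - x| := by
    calc infDist t S ^ 2 = infDist t S * infDist t S := sq (infDist t S) ▸ by ring
    _ ≤ |t - x| * |t - x| := by apply mul_le_mul hb hb hn (abs_nonneg _)
  have habs : |infDist t S ^ 2 - 0 ^ 2| = infDist t S ^ 2 := by
    rw [this]; exact abs_of_nonneg (by positivity)
  rw [habs]
  calc infDist t S ^ 2 ≤ |t - x| * |t - x| := h2
  _ ≤ c * |t - x| := by
      apply mul_le_mul_of_nonneg_right _ (abs_nonneg _)
      have := mem_ball_iff_norm.1 ht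
      simpa [Real.norm_eq_abs] using this.le

-- distance inside a gap, left endpoint
lemma infDist_eq_in_gap_right {S : Set ℝ} {a c t : ℝ} (ha : a ∈ S)
    (hgap : S ∩ Ioo a c = ∅) (ht1 : a < t) (ht2 : t < (a + c) / 2) :
    infDist t S = t - a := by
  apply le_antisymm
  · simpa [Real.dist_eq, abs_of_pos (sub_pos.2 ht1)] using
      infDist_le_dist_of_mem (x := t) ha
  · apply le_infDist' ⟨a, ha⟩
    intro s hs
    rw [Real.dist_eq]
    rcases le_or_gt s a with h | h
    · calc t - a ≤ t - s := by linarith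
      _ ≤ |t - s| := le_abs_self _
    · have hsc : c ≤ s := by
        by_contra hlt
        push_neg at hlt
        rw [Set.eq_empty_iff_forall_notMem] at hgap
        exact hgap s ⟨hs, h, hlt⟩
      have : t - a ≤ s - t := by linarith
      calc t - a ≤ s - t := this
      _ ≤ |t - s| := by rw [abs_sub_comm]; exact le_abs_self _

lemma infDist_eq_in_gap_left {S : Set ℝ} {b c t : ℝ} (hb : b ∈ S)
    (hgap : S ∩ Ioo c b = ∅) (ht1 : (c + b) / 2 < t) (ht2 : t < b) :
    infDist t S = b - t := by
  apply le_antisymm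
  · have : dist t b = b - t := by rw [Real.dist_eq, abs_of_neg (by linarith)]; ring
    simpa [this] using infDist_le_dist_of_mem (x := t) hb
  · apply le_infDist' ⟨b, hb⟩
    intro s hs
    rw [Real.dist_eq]
    rcases le_or_gt b s with h | h
    · calc b - t ≤ s - t := by linarith
      _ ≤ |t - s| := by rw [abs_sub_comm]; exact le_abs_self _
    · have hsc : s ≤ c := by
        by_contra hlt
        push_neg at hlt
        rw [Set.eq_empty_iff_forall_notMem] at hgap
        exact hgap s ⟨hs, hlt, h⟩
      have : b - t ≤ t - s := by linarith
      calc b - t ≤ t - s := this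
      _ ≤ |t - s| := le_abs_self _

lemma sq_infDist_deriv_gap_right {S : Set ℝ} {a c x : ℝ} (ha : a ∈ S)
    (hgap : S ∩ Ioo a c = ∅) (hx1 : a < x) (hx2 : x < (a + c) / 2) :
    HasDerivAt (fun t => infDist t S ^ 2) (2 * (x - a)) x := by
  have hev : (fun t => infDist t S ^ 2) =ᶠ[nhds x] fun t => (t - a) ^ 2 := by
    filter_upwards [Ioo_mem_nhds hx1 hx2] with t ht
    rw [infDist_eq_in_gap_right ha hgap ht.1 ht.2]
  have hd : HasDerivAt (fun t : ℝ => (t - a) ^ 2) (2 * (x - a)) x := by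
    have := ((hasDerivAt_id x).sub_const a).pow 2
    simpa [Pi.pow_def] using this
  exact hd.congr_of_eventuallyEq hev

lemma sq_infDist_deriv_gap_left {S : Set ℝ} {b c x : ℝ} (hb : b ∈ S)
    (hgap : S ∩ Ioo c b = ∅) (hx1 : (c + b) / 2 < x) (hx2 : x < b) :
    HasDerivAt (fun t => infDist t S ^ 2) (-(2 * (b - x))) x := by
  have hev : (fun t => infDist t S ^ 2) =ᶠ[nhds x] fun t => (b - t) ^ 2 := by
    filter_upwards [Ioo_mem_nhds hx1 hx2] with t ht
    rw [infDist_eq_in_gap_left hb hgap ht.1 ht.2]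
  have hd : HasDerivAt (fun t : ℝ => (b - t) ^ 2) (-(2 * (b - x))) x := by
    have := ((hasDerivAt_id x).const_sub b).pow 2
    simpa [Pi.pow_def] using this
  exact hd.congr_of_eventuallyEq hev

-- gradient of f = -sqrt(q(w0)+q(w1))
lemma grad_formula {S : Set ℝ} {x y u0 u1 : ℝ} (hne : S.Nonempty)
    (h0 : HasDerivAt (fun t => infDist t S ^ 2) u0 x)
    (h1 : HasDerivAt (fun t => infDist t S ^ 2) u1 y)
    (hpos : 0 < infDist x S ^ 2 + infDist y S ^ 2) :
    HasGradientAt (fun w : E2 => -Real.sqrt (infDist (w 0) S ^ 2 + infDist (w 1) S ^ 2))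
      (mk2 (-u0 / (2 * Real.sqrt (infDist x S ^ 2 + infDist y S ^ 2)))
           (-u1 / (2 * Real.sqrt (infDist x S ^ 2 + infDist y S ^ 2)))) (mk2 x y) := by
  set q : ℝ → ℝ := fun t => infDist t S ^ 2 with hq
  set r : ℝ := Real.sqrt (q x + q y) with hr
  have hrpos : 0 < r := Real.sqrt_pos.2 hpos
  set w : E2 := mk2 x y with hwdef
  have hF0 : HasFDerivAt (fun w' : E2 => q (w' 0))
      ((ContinuousLinearMap.smulRight (1 : ℝ →L[ℝ] ℝ) u0).comp (EuclideanSpace.proj 0)) w := by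
    have := HasFDerivAt.comp (𝕜 := ℝ) w (h0.hasFDerivAt) (EuclideanSpace.proj (𝕜 := ℝ) 0).hasFDerivAt
    simpa [Function.comp_def, ContinuousLinearMap.smulRight_one_eq_toSpanSingleton] using this
  have hF1 : HasFDerivAt (fun w' : E2 => q (w' 1))
      ((ContinuousLinearMap.smulRight (1 : ℝ →L[ℝ] ℝ) u1).comp (EuclideanSpace.proj 1)) w := by
    have := HasFDerivAt.comp (𝕜 := ℝ) w (h1.hasFDerivAt) (EuclideanSpace.proj (𝕜 := ℝ) 1).hasFDerivAt
    simpa [Function.comp_def, ContinuousLinearMap.smulRight_one_eq_toSpanSingleton] using this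
  have hF : HasFDerivAt (fun w' : E2 => q (w' 0) + q (w' 1))
      ((ContinuousLinearMap.smulRight (1 : ℝ →L[ℝ] ℝ) u0).comp (EuclideanSpace.proj 0)
        + (ContinuousLinearMap.smulRight (1 : ℝ →L[ℝ] ℝ) u1).comp (EuclideanSpace.proj 1)) w :=
    hF0.add hF1
  have hsq : HasDerivAt Real.sqrt (1 / (2 * r)) ((fun w' : E2 => q (w' 0) + q (w' 1)) w) := by
    have hval : (fun w' : E2 => q (w' 0) + q (w' 1)) w = q x + q y := by simp [hwdef]
    rw [hval]
    exact Real.hasDerivAt_sqrt (ne_of_gt hpos)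
  have hcomp := hsq.comp_hasFDerivAt w hF
  have hfin := hcomp.neg
  rw [hasGradientAt_iff_hasFDerivAt]
  refine HasFDerivAt.congr_fderiv hfin ?_
  apply ContinuousLinearMap.ext
  intro v
  simp only [InnerProductSpace.toDual_apply_apply, PiLp.inner_apply, RCLike.inner_apply,
    Fin.sum_univ_two, ContinuousLinearMap.neg_apply, ContinuousLinearMap.smul_apply,
    ContinuousLinearMap.add_apply, ContinuousLinearMap.comp_apply,
    ContinuousLinearMap.smulRight_apply, ContinuousLinearMap.one_apply,
    PiLp.proj_apply, mk2_zero, mk2_one, conj_trivial, smul_eq_mul]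
  field_simp
  ring

-- finding a point not in S inside a small interval
lemma exists_not_mem {S : Set ℝ} (hInt : interior S = ∅) {a b : ℝ} (hab : a < b) :
    ∃ x ∈ Ioo a b, x ∉ S := by
  by_contra h
  push_neg at h
  have hsub : Ioo a b ⊆ S := fun x hx => h x hx
  have : Ioo a b ⊆ interior S := (isOpen_Ioo).subset_interior_iff.2 hsub
  rw [hInt] at this
  have hmem : (a + b) / 2 ∈ Ioo a b := by rw [Set.mem_Ioo]; constructor <;> linarith
  exact absurd (this hmem) (by simp)

/-- For each coordinate: near a point of S we can find, for all small θ, a point where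
the squared distance has the prescribed derivative `-(2*c*θ)` and distance `|c|*θ`. -/
lemma coord {S : Set ℝ} (hS : IsClosed S) (hInt : interior S = ∅) {z0 : ℝ}
    (hz0 : z0 ∈ S) (c : ℝ) {ε : ℝ} (hε : 0 < ε) :
    ∃ δ > 0, ∀ θ : ℝ, 0 < θ → θ < δ → ∃ t : ℝ, |t - z0| < ε ∧ infDist t S = |c| * θ ∧
      HasDerivAt (fun s => infDist s S ^ 2) (-(2 * c * θ)) t := by
  rcases lt_trichotomy c 0 with hc | hc | hc
  · -- right gap
    obtain ⟨x, hx, hxS⟩ := exists_not_mem hInt (show z0 < z0 + ε / 2 by linarith)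
    have hKc : IsCompact (S ∩ Icc z0 x) := (isCompact_Icc).inter_left hS
    have hKne : (S ∩ Icc z0 x).Nonempty := ⟨z0, hz0, le_refl _, hx.1.le⟩
    obtain ⟨a, haK⟩ : ∃ a, a ∈ S ∩ Icc z0 x ∧ ∀ s ∈ S ∩ Icc z0 x, s ≤ a :=
      ⟨sSup _, hKc.sSup_mem hKne, fun s hs => le_csSup hKc.bddAbove hs⟩
    obtain ⟨haK, hamax⟩ := haK
    have haS : a ∈ S := haK.1
    have hax : a ≤ x := haK.2.2
    have haz : z0 ≤ a := hamax z0 ⟨hz0, le_refl _, hx.1.le⟩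
    have hax' : a < x := lt_of_le_of_ne hax (fun h => hxS (h ▸ haS))
    have hgap : S ∩ Ioo a x = ∅ := by
      rw [Set.eq_empty_iff_forall_notMem]
      rintro s ⟨hsS, hs1, hs2⟩
      have hzs : z0 ≤ s := le_trans haz hs1.le
      exact absurd (hamax s ⟨hsS, hzs, hs2.le⟩) (not_le.2 hs1)
    obtain ⟨m, hm0, hm⟩ : ∃ m : ℝ, 0 < m ∧ m = -c := ⟨-c, by linarith, rfl⟩
    refine ⟨min ((x - a) / (2 * m)) (ε / (2 * m)),
      lt_min (div_pos (by linarith) (by positivity)) (div_pos hε (by positivity)), ?_⟩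
    intro θ hθ hθδ
    refine ⟨a + m * θ, ?_, ?_, ?_⟩
    · have h1 : m * θ < ε / 2 := by
        have := lt_of_lt_of_le hθδ (min_le_right _ _)
        calc m * θ < m * (ε / (2 * m)) := by exact mul_lt_mul_of_pos_left this hm0
        _ = ε / 2 := by field_simp
      have h2 : a - z0 < ε / 2 := by
        have : x - z0 < ε / 2 := by linarith [hx.2]
        linarith
      rw [abs_of_nonneg (by nlinarith)]
      linarith
    · have h1 : a < a + m * θ := by nlinarith
      have h2 : a + m * θ < (a + x) / 2 := by
        have := lt_of_lt_of_le hθδ (min_le_left _ _)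
        have : m * θ < (x - a) / 2 := by
          calc m * θ < m * ((x - a) / (2 * m)) := mul_lt_mul_of_pos_left this hm0
          _ = (x - a) / 2 := by field_simp
        linarith
      rw [infDist_eq_in_gap_right haS hgap h1 h2]
      rw [abs_of_neg hc, hm]; ring
    · have h1 : a < a + m * θ := by nlinarith
      have h2 : a + m * θ < (a + x) / 2 := by
        have := lt_of_lt_of_le hθδ (min_le_left _ _)
        have : m * θ < (x - a) / 2 := by
          calc m * θ < m * ((x - a) / (2 * m)) := mul_lt_mul_of_pos_left this hm0
          _ = (x - a) / 2 := by field_simp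
        linarith
      have := sq_infDist_deriv_gap_right haS hgap h1 h2
      convert this using 1
      rw [hm]; ring
  · -- c = 0 : stay at z0
    refine ⟨1, one_pos, fun θ hθ hθδ => ⟨z0, by simpa using hε, ?_, ?_⟩⟩
    · rw [infDist_zero_of_mem hz0, hc]; simp
    · rw [hc]; simpa using sq_infDist_deriv_mem hz0
  · -- left gap
    obtain ⟨x, hx, hxS⟩ := exists_not_mem hInt (show z0 - ε / 2 < z0 by linarith)
    have hKc : IsCompact (S ∩ Icc x z0) := (isCompact_Icc).inter_left hS
    have hKne : (S ∩ Icc x z0).Nonempty := ⟨z0, hz0, hx.2.le, le_refl _⟩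
    obtain ⟨b, hbK⟩ : ∃ b, b ∈ S ∩ Icc x z0 ∧ ∀ s ∈ S ∩ Icc x z0, b ≤ s :=
      ⟨sInf _, hKc.sInf_mem hKne, fun s hs => csInf_le hKc.bddBelow hs⟩
    obtain ⟨hbK, hbmin⟩ := hbK
    have hbS : b ∈ S := hbK.1
    have hxb : x ≤ b := hbK.2.1
    have hbz : b ≤ z0 := hbmin z0 ⟨hz0, hx.2.le, le_refl _⟩
    have hxb' : x < b := lt_of_le_of_ne hxb (fun h => hxS (h ▸ hbS))
    have hgap : S ∩ Ioo x b = ∅ := by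
      rw [Set.eq_empty_iff_forall_notMem]
      rintro s ⟨hsS, hs1, hs2⟩
      have hsz : s ≤ z0 := le_trans hs2.le hbz
      exact absurd (hbmin s ⟨hsS, hs1.le, hsz⟩) (not_le.2 hs2)
    refine ⟨min ((b - x) / (2 * c)) (ε / (2 * c)),
      lt_min (div_pos (by linarith) (by positivity)) (div_pos hε (by positivity)), ?_⟩
    intro θ hθ hθδ
    refine ⟨b - c * θ, ?_, ?_, ?_⟩
    · have h1 : c * θ < ε / 2 := by
        have := lt_of_lt_of_le hθδ (min_le_right _ _)
        calc c * θ < c * (ε / (2 * c)) := mul_lt_mul_of_pos_left this hc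
        _ = ε / 2 := by field_simp
      have h2 : z0 - b < ε / 2 := by linarith [hx.1]
      rw [abs_of_nonpos (by nlinarith)]
      have : z0 - (b - c * θ) < ε := by linarith
      linarith
    · have hcθ : c * θ < (b - x) / 2 := by
        have := lt_of_lt_of_le hθδ (min_le_left _ _)
        calc c * θ < c * ((b - x) / (2 * c)) := mul_lt_mul_of_pos_left this hc
        _ = (b - x) / 2 := by field_simp
      have h1 : (x + b) / 2 < b - c * θ := by linarith
      have h2 : b - c * θ < b := by nlinarith
      rw [infDist_eq_in_gap_left hbS hgap h1 h2]
      rw [abs_of_pos hc]; ring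
    · have hcθ : c * θ < (b - x) / 2 := by
        have := lt_of_lt_of_le hθδ (min_le_left _ _)
        calc c * θ < c * ((b - x) / (2 * c)) := mul_lt_mul_of_pos_left this hc
        _ = (b - x) / 2 := by field_simp
      have h1 : (x + b) / 2 < b - c * θ := by linarith
      have h2 : b - c * θ < b := by nlinarith
      have := sq_infDist_deriv_gap_left hbS hgap h1 h2
      convert this using 1
      ring_nf

lemma mk2_self (v : E2) : mk2 (v 0) (v 1) = v := by
  ext i
  fin_cases i <;> rfl

lemma sphere_mem {S : Set ℝ} (hS : IsClosed S) (hInt : interior S = ∅)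
    {z : E2} (hz : z 0 ∈ S ∧ z 1 ∈ S) {v : E2} (hv : ‖v‖ = 1) :
    ∃ zk gk : ℕ → E2,
      (∀ k, HasGradientAt (fun w : E2 => -infDist w {w' : E2 | w' 0 ∈ S ∧ w' 1 ∈ S})
        (gk k) (zk k)) ∧
      Tendsto zk atTop (nhds z) ∧ Tendsto gk atTop (nhds v) := by
  have hne : S.Nonempty := ⟨z 0, hz.1⟩
  have hfe : (fun w : E2 => -infDist w {w' : E2 | w' 0 ∈ S ∧ w' 1 ∈ S})
      = fun w : E2 => -Real.sqrt (infDist (w 0) S ^ 2 + infDist (w 1) S ^ 2) :=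
    funext fun w => by rw [prod_infDist hS hne w]
  have hv2 : (v 0) ^ 2 + (v 1) ^ 2 = 1 := by
    have := EuclideanSpace.norm_eq v
    rw [hv] at this
    have h1 : Real.sqrt (∑ i : Fin 2, ‖v i‖ ^ 2) = 1 := this.symm
    have h2 : (∑ i : Fin 2, ‖v i‖ ^ 2) = 1 := by
      have hnn : (0:ℝ) ≤ ∑ i : Fin 2, ‖v i‖ ^ 2 := by positivity
      nlinarith [Real.sq_sqrt hnn]
    simpa [Fin.sum_univ_two, Real.norm_eq_abs, sq_abs] using h2
  have H : ∀ k : ℕ, ∃ w : E2, dist w z ≤ 2 * (1 / (k + 1)) ∧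
      HasGradientAt (fun w : E2 => -infDist w {w' : E2 | w' 0 ∈ S ∧ w' 1 ∈ S}) v w := by
    intro k
    have hεpos : (0:ℝ) < 1 / (k + 1) := by positivity
    obtain ⟨δ0, hδ0, h0⟩ := coord hS hInt hz.1 (v 0) hεpos
    obtain ⟨δ1, hδ1, h1⟩ := coord hS hInt hz.2 (v 1) hεpos
    set θ : ℝ := min δ0 δ1 / 2 with hθdef
    have hθpos : 0 < θ := by positivity
    have hθ0 : θ < δ0 := by
      have := min_le_left δ0 δ1; simp only [hθdef]; linarith
    have hθ1 : θ < δ1 := by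
      have := min_le_right δ0 δ1; simp only [hθdef]; linarith
    obtain ⟨t0, ht0d, ht0i, ht0g⟩ := h0 θ hθpos hθ0
    obtain ⟨t1, ht1d, ht1i, ht1g⟩ := h1 θ hθpos hθ1
    have hsum : infDist t0 S ^ 2 + infDist t1 S ^ 2 = θ ^ 2 := by
      rw [ht0i, ht1i]
      rw [mul_pow, mul_pow, sq_abs, sq_abs]
      nlinarith [hv2]
    have hpos : 0 < infDist t0 S ^ 2 + infDist t1 S ^ 2 := by
      rw [hsum]; positivity
    have hsqrt : Real.sqrt (infDist t0 S ^ 2 + infDist t1 S ^ 2) = θ := by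
      rw [hsum, Real.sqrt_sq hθpos.le]
    have hgrad := grad_formula hne ht0g ht1g hpos
    rw [hsqrt] at hgrad
    have hg0 : -(-(2 * v 0 * θ)) / (2 * θ) = v 0 := by
      field_simp
    have hg1 : -(-(2 * v 1 * θ)) / (2 * θ) = v 1 := by
      field_simp
    rw [hg0, hg1, mk2_self] at hgrad
    refine ⟨mk2 t0 t1, ?_, by rw [hfe]; exact hgrad⟩
    rw [EuclideanSpace.dist_eq, Fin.sum_univ_two]
    have hd0 : dist (mk2 t0 t1 0) (z 0) ≤ 1 / (k + 1) := by
      rw [mk2_zero, Real.dist_eq]; exact ht0d.le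
    have hd1 : dist (mk2 t0 t1 1) (z 1) ≤ 1 / (k + 1) := by
      rw [mk2_one, Real.dist_eq]; exact ht1d.le
    have : dist (mk2 t0 t1 0) (z 0) ^ 2 + dist (mk2 t0 t1 1) (z 1) ^ 2
        ≤ (2 * (1 / (k + 1))) ^ 2 := by
      have e0 := dist_nonneg (x := mk2 t0 t1 0) (y := z 0)
      have e1 := dist_nonneg (x := mk2 t0 t1 1) (y := z 1)
      nlinarith
    calc Real.sqrt (dist (mk2 t0 t1 0) (z 0) ^ 2 + dist (mk2 t0 t1 1) (z 1) ^ 2)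
        ≤ Real.sqrt ((2 * (1 / (k + 1))) ^ 2) := Real.sqrt_le_sqrt this
      _ = 2 * (1 / (k + 1)) := Real.sqrt_sq (by positivity)
  choose zk hzk hgrad using H
  refine ⟨zk, fun _ => v, hgrad, ?_, tendsto_const_nhds⟩
  rw [tendsto_iff_dist_tendsto_zero]
  apply squeeze_zero (fun k => dist_nonneg) hzk
  have := tendsto_one_div_add_atTop_nhds_zero_nat (𝕜 := ℝ)
  simpa using this.const_mul 2

lemma lip_neg_infDist (C : Set E2) :
    LipschitzWith 1 (fun w : E2 => -infDist w C) := by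
  apply LipschitzWith.of_dist_le_mul
  intro a b
  have := (lipschitz_infDist_pt C).dist_le_mul a b
  calc dist (-infDist a C) (-infDist b C) = dist (infDist a C) (infDist b C) := by
        rw [Real.dist_eq, Real.dist_eq]; rw [abs_sub_comm]; ring_nf
    _ ≤ 1 * dist a b := this

lemma limit_grad_mem_ball {f : E2 → ℝ} (hlip : LipschitzWith 1 f) {z v : E2}
    (hv : ∃ zk gk : ℕ → E2, (∀ k, HasGradientAt f (gk k) (zk k)) ∧
      Tendsto zk atTop (nhds z) ∧ Tendsto gk atTop (nhds v)) :
    v ∈ closedBall (0 : E2) 1 := by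
  obtain ⟨zk, gk, hgrad, _, hgv⟩ := hv
  have hball : ∀ k, gk k ∈ closedBall (0 : E2) 1 := by
    intro k
    have hF := (hgrad k).hasFDerivAt
    have hn := hF.le_of_lipschitz hlip
    rw [mem_closedBall_zero_iff]
    have : ‖InnerProductSpace.toDual ℝ E2 (gk k)‖ = ‖gk k‖ :=
      (InnerProductSpace.toDual ℝ E2).norm_map (gk k)
    rw [this] at hn
    simpa using hn
  exact (isClosed_closedBall (x := (0:E2)) (ε := 1)).mem_of_tendsto hgv (Eventually.of_forall hball)

/-- Clarke subdifferential of a locally Lipschitz function on the Euclidean plane: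
convex hull of limits of gradients at nearby points of differentiability. -/
def clarke (g : E2 → ℝ) (z : E2) : Set E2 :=
  convexHull ℝ {v | ∃ zk gk : ℕ → E2, (∀ k, HasGradientAt g (gk k) (zk k)) ∧
    Tendsto zk atTop (nhds z) ∧ Tendsto gk atTop (nhds v)}

theorem stmt15 (S : Set ℝ) (hS : IsClosed S) (hInt : interior S = ∅)
    (z : E2) (hz : z 0 ∈ S ∧ z 1 ∈ S) :
    clarke (fun w : E2 => -infDist w {w' : E2 | w' 0 ∈ S ∧ w' 1 ∈ S}) z =
      closedBall (0 : E2) 1 := by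
  set f : E2 → ℝ := fun w : E2 => -infDist w {w' : E2 | w' 0 ∈ S ∧ w' 1 ∈ S} with hf
  set A : Set E2 := {v | ∃ zk gk : ℕ → E2, (∀ k, HasGradientAt f (gk k) (zk k)) ∧
    Tendsto zk atTop (nhds z) ∧ Tendsto gk atTop (nhds v)} with hA
  have hAdef : clarke f z = convexHull ℝ A := rfl
  have hsub : A ⊆ closedBall (0 : E2) 1 := fun v hv =>
    limit_grad_mem_ball (lip_neg_infDist _) hv
  have hsphere : ∀ v : E2, ‖v‖ = 1 → v ∈ A := fun v hv => sphere_mem hS hInt hz hv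
  rw [hAdef]
  apply Set.Subset.antisymm
  · exact convexHull_min hsub (convex_closedBall (0 : E2) 1)
  · intro w hw
    rw [mem_closedBall_zero_iff] at hw
    rcases eq_or_ne w 0 with hw0 | hw0
    · set u : E2 := EuclideanSpace.single 0 (1 : ℝ) with hu
      have hun : ‖u‖ = 1 := by rw [hu, EuclideanSpace.norm_single]; norm_num
      have h1 : u ∈ convexHull ℝ A := subset_convexHull ℝ A (hsphere u hun)
      have h2 : -u ∈ convexHull ℝ A := subset_convexHull ℝ A
        (hsphere (-u) (by rw [norm_neg]; exact hun))
      have := (convex_convexHull ℝ A) h1 h2 (by norm_num : (0:ℝ) ≤ 1/2)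
        (by norm_num : (0:ℝ) ≤ 1/2) (by norm_num)
      rw [hw0]
      convert this using 1
      simp [smul_neg]
    · set n : ℝ := ‖w‖ with hn
      have hnpos : 0 < n := norm_pos_iff.2 hw0
      set u : E2 := n⁻¹ • w with hu
      have hun : ‖u‖ = 1 := by
        rw [hu, norm_smul, norm_inv, norm_norm, ← hn, inv_mul_cancel₀ hnpos.ne']
      have h1 : u ∈ convexHull ℝ A := subset_convexHull ℝ A (hsphere u hun)
      have h2 : -u ∈ convexHull ℝ A := subset_convexHull ℝ A
        (hsphere (-u) (by rw [norm_neg]; exact hun))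
      have hcomb := (convex_convexHull ℝ A) h1 h2
        (by linarith : (0:ℝ) ≤ (1 + n) / 2) (by linarith : (0:ℝ) ≤ (1 - n) / 2)
        (by ring : (1 + n) / 2 + (1 - n) / 2 = 1)
      have heq : ((1 + n) / 2) • u + ((1 - n) / 2) • (-u) = w := by
        rw [smul_neg, ← sub_eq_add_neg, ← sub_smul]
        have : (1 + n) / 2 - (1 - n) / 2 = n := by ring
        rw [this, hu, smul_smul, mul_inv_cancel₀ hnpos.ne', one_smul]
      rwa [heq] at hcomb
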